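/- Let μ be a Borel probability measure on Σ^ℤ. The function δ^μ(c,d) = μ([D(c,d)]₀), where D(c,d) is the difference set of c and d for a common radius, is a pseudometric on the set of cellular automata, and it is a metric if and only if μ has full support. -/

import Mathlib

open MeasureTheory Filter Function

section BasicDefs

variable {A : Type}

/-- `f` admits a local rule of radius `r`: there is `F` depending only on
coordinates in `[-r, r]` such that `f x i = F (σ^i x)`. -/
def HasRadius (r : ℕ) (f : (ℤ → A) → (ℤ → A)) : Prop :=
  ∃ F : (ℤ → A) → A,
    (∀ x y : ℤ → A, (∀ j : ℤ, |j| ≤ (r : ℤ) → x j = y j) → F x = F y) ∧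
    ∀ (x : ℤ → A) (i : ℤ), f x i = F fun j => x (i + j)

/-- A cellular automaton is a map admitting a local rule of some radius. -/
def IsCA (f : (ℤ → A) → (ℤ → A)) : Prop := ∃ r, HasRadius r f

/-- The minimal radius of a cellular automaton. -/
noncomputable def rad (f : (ℤ → A) → (ℤ → A)) : ℕ := sInf {r : ℕ | HasRadius r f}

/-- Centered words of radius `r`. -/
def Word (A : Type) (r : ℕ) := (Finset.Icc (-(r : ℤ)) (r : ℤ) : Finset ℤ) → A

/-- The difference set of `c` and `d` for radius `r`: centered words of radius `r`
on which the images of `c` and `d` differ at the central cell. -/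
def diffSet (r : ℕ) (c d : (ℤ → A) → (ℤ → A)) : Set (Word A r) :=
  {w | ∃ x : ℤ → A, (∀ j : (Finset.Icc (-(r : ℤ)) (r : ℤ) : Finset ℤ), x j.1 = w j) ∧
        c x 0 ≠ d x 0}

/-- The shift map. -/
def shift (x : ℤ → A) : ℤ → A := fun i => x (i + 1)

/-- Preimages of the centered word `v` of radius `n` under the word function of `c`
used with radius `r`: centered words `u` of radius `n + r` such that some (equivalently,
by the radius assumption, every) configuration extending `u` maps under `c` to a
configuration extending `v` in its central part. -/
def wordPreimages (c : (ℤ → A) → (ℤ → A)) (n r : ℕ) (v : Word A n) :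
    Set (Word A (n + r)) :=
  {u | ∃ x : ℤ → A,
        (∀ j : (Finset.Icc (-((n + r : ℕ) : ℤ)) ((n + r : ℕ) : ℤ) : Finset ℤ), x j.1 = u j) ∧
        ∀ j : (Finset.Icc (-(n : ℤ)) (n : ℤ) : Finset ℤ), c x j.1 = v j}

-- The Cantor metric on configurations.
open Classical in
noncomputable def dC (x y : ℤ → A) : ℝ :=
  ∑' i : ℤ, if x i ≠ y i then (2 : ℝ) ^ (-|i|) else 0

/-- The Besicovitch pseudodistance on configurations. -/
noncomputable def dB (x y : ℤ → A) : ℝ :=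
  limsup (fun n : ℕ =>
    (({i : ℤ | |i| ≤ (n : ℤ) ∧ x i ≠ y i}.ncard : ℝ)) / (2 * (n : ℝ) + 1)) atTop

end BasicDefs

section FintypeDefs

variable {A : Type} [Fintype A]

/-- The normalized size of the difference set for radius `r`. -/
noncomputable def deltaR (r : ℕ) (c d : (ℤ → A) → (ℤ → A)) : ℝ :=
  (diffSet r c d).ncard / (Fintype.card A : ℝ) ^ (2 * r + 1)

/-- The uniform Bernoulli distance between two cellular automata (computed with the
common radius `max (rad c) (rad d)`; by radius-independence this is the canonical value). -/
noncomputable def delta (c d : (ℤ → A) → (ℤ → A)) : ℝ :=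
  deltaR (max (rad c) (rad d)) c d

end FintypeDefs

section MeasureDefs

variable {A : Type} [MeasurableSpace A]

/-- The pseudometric on cellular automata induced by the measure `μ`:
the measure of the cylinder of the difference set, i.e. of the set of
configurations on which `c` and `d` differ at coordinate `0`. -/
noncomputable def deltaMu (μ : Measure (ℤ → A)) (c d : (ℤ → A) → (ℤ → A)) : ℝ :=
  (μ {x | c x 0 ≠ d x 0}).toReal

/-- `c` preserves the measure `μ`. -/
def Preserves (μ : Measure (ℤ → A)) (c : (ℤ → A) → (ℤ → A)) : Prop :=
  ∀ B : Set (ℤ → A), MeasurableSet B → μ (c ⁻¹' B) = μ B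

/-- `μ` is shift-invariant. -/
def ShiftInvariant (μ : Measure (ℤ → A)) : Prop :=
  ∀ B : Set (ℤ → A), MeasurableSet B → μ (shift ⁻¹' B) = μ B

end MeasureDefs



section Aux

variable {A : Type}

/-- The cylinder of radius `r` around `x`. -/
def Cyl (x : ℤ → A) (r : ℕ) : Set (ℤ → A) := {y | ∀ j : ℤ, |j| ≤ (r : ℤ) → y j = x j}

lemma mem_Cyl_self (x : ℤ → A) (r : ℕ) : x ∈ Cyl x r := fun _ _ => rfl

lemma isOpen_Cyl [TopologicalSpace A] [DiscreteTopology A] (x : ℤ → A) (r : ℕ) :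
    IsOpen (Cyl x r) := by
  have h : Cyl x r = ⋂ j ∈ Finset.Icc (-(r:ℤ)) (r:ℤ), (fun y : ℤ → A => y j) ⁻¹' {x j} := by
    ext y
    simp only [Set.mem_iInter, Set.mem_preimage, Set.mem_singleton_iff, Finset.mem_Icc, Cyl,
      Set.mem_setOf_eq]
    constructor
    · intro h j hj; exact h j (abs_le.mpr hj)
    · intro h j hj; exact h j (abs_le.mp hj)
  rw [h]
  exact isOpen_biInter_finset fun j _ =>
    (continuous_apply j).isOpen_preimage _ (isOpen_discrete _)

lemma hasRadius_mono {r r' : ℕ} (h : r ≤ r') {f : (ℤ → A) → (ℤ → A)}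
    (hf : HasRadius r f) : HasRadius r' f := by
  obtain ⟨F, hF, hf⟩ := hf
  exact ⟨F, fun x y hxy => hF x y (fun j hj => hxy j (hj.trans (by exact_mod_cast h))), hf⟩

lemma open_has_cyl [TopologicalSpace A] [DiscreteTopology A] {U : Set (ℤ → A)}
    (hU : IsOpen U) (hne : U.Nonempty) : ∃ x r, Cyl x r ⊆ U := by
  obtain ⟨y, hy⟩ := hne
  obtain ⟨I, u, hu, hsub⟩ := (isOpen_pi_iff.mp hU) y hy
  refine ⟨y, I.sup Int.natAbs, fun z hz => hsub ?_⟩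
  intro i hi
  have hi' : i ∈ I := hi
  have : z i = y i := hz i (by
    rw [Int.abs_eq_natAbs]
    exact_mod_cast Finset.le_sup (f := Int.natAbs) hi')
  rw [this]; exact (hu i hi').2

end Aux

/-- `δ^μ(c,d) = μ({x : c(x)₀ ≠ d(x)₀})` is a pseudometric on the set of
cellular automata, and it is a metric if and only if `μ` has full support. -/
theorem stmt10 {A : Type} [Fintype A] [TopologicalSpace A] [DiscreteTopology A]
    [MeasurableSpace A] [BorelSpace A] (hA : 2 ≤ Fintype.card A)
    (μ : Measure (ℤ → A)) [IsProbabilityMeasure μ] :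
    ((∀ c : (ℤ → A) → (ℤ → A), deltaMu μ c c = 0) ∧
     (∀ c d : (ℤ → A) → (ℤ → A), 0 ≤ deltaMu μ c d) ∧
     (∀ c d : (ℤ → A) → (ℤ → A), deltaMu μ c d = deltaMu μ d c) ∧
     (∀ c d e : (ℤ → A) → (ℤ → A), IsCA c → IsCA d → IsCA e →
        deltaMu μ c e ≤ deltaMu μ c d + deltaMu μ d e)) ∧
    ((∀ c d : (ℤ → A) → (ℤ → A), IsCA c → IsCA d → deltaMu μ c d = 0 → c = d) ↔
      (∀ U : Set (ℤ → A), IsOpen U → U.Nonempty → 0 < μ U)) := by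
  have key : ∀ c d : (ℤ → A) → (ℤ → A), μ {x | c x 0 ≠ d x 0} ≠ ⊤ :=
    fun c d => measure_ne_top μ _
  constructor
  · refine ⟨?_, ?_, ?_, ?_⟩
    · intro c; simp [deltaMu]
    · intro c d; exact ENNReal.toReal_nonneg
    · intro c d
      unfold deltaMu
      congr 1
      apply congrArg
      ext x
      exact ne_comm
    · intro c d e _ _ _
      unfold deltaMu
      have hsub : {x | c x 0 ≠ e x 0} ⊆ {x | c x 0 ≠ d x 0} ∪ {x | d x 0 ≠ e x 0} := by
        intro x hx
        by_contra h
        simp only [Set.mem_union, Set.mem_setOf_eq, not_or, not_not] at h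
        exact hx (h.1.trans h.2)
      calc (μ {x | c x 0 ≠ e x 0}).toReal
          ≤ (μ {x | c x 0 ≠ d x 0} + μ {x | d x 0 ≠ e x 0}).toReal := by
            apply ENNReal.toReal_mono
            · exact ENNReal.add_ne_top.mpr ⟨key c d, key d e⟩
            · exact le_trans (measure_mono hsub) (measure_union_le _ _)
        _ = (μ {x | c x 0 ≠ d x 0}).toReal + (μ {x | d x 0 ≠ e x 0}).toReal :=
            ENNReal.toReal_add (key c d) (key d e)
  · constructor
    · -- metric → full support
      intro hmetric U hUopen hUne
      by_contra hpos
      push_neg at hpos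
      have hU0 : μ U = 0 := le_antisymm hpos zero_le
      obtain ⟨x, r, hcyl⟩ := open_has_cyl hUopen hUne
      obtain ⟨a, ha⟩ := Fintype.exists_ne_of_one_lt_card (by omega) (x 0)
      classical
      set F : (ℤ → A) → A :=
        fun y => if ∀ j : ℤ, |j| ≤ (r : ℤ) → y j = x j then a else y 0 with hF
      set d : (ℤ → A) → (ℤ → A) := fun y i => F (fun j => y (i + j)) with hd
      have hd0 : ∀ y : ℤ → A, d y 0 = F y := by
        intro y
        simp only [hd]
        congr 1
        ext j
        rw [zero_add]
      have hdCA : IsCA d := by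
        refine ⟨r, F, ?_, fun y i => rfl⟩
        intro y z hyz
        simp only [hF]
        by_cases hc : ∀ j : ℤ, |j| ≤ (r : ℤ) → y j = x j
        · rw [if_pos hc, if_pos (fun j hj => (hyz j hj).symm.trans (hc j hj))]
        · rw [if_neg hc, if_neg ?_, hyz 0 (by simp)]
          intro hc'
          exact hc fun j hj => (hyz j hj).trans (hc' j hj)
      have hidCA : IsCA (id : (ℤ → A) → (ℤ → A)) := by
        refine ⟨0, fun y => y 0, ?_, ?_⟩
        · intro y z h; exact h 0 (by simp)
        · intro y i; simp
      have hSeq : {y : ℤ → A | id y 0 ≠ d y 0} = Cyl x r := by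
        ext y
        simp only [Set.mem_setOf_eq, id_eq, hd0, hF]
        by_cases hc : ∀ j : ℤ, |j| ≤ (r : ℤ) → y j = x j
        · rw [if_pos hc]
          have : y 0 = x 0 := hc 0 (by simp)
          simp only [Cyl, Set.mem_setOf_eq]
          constructor
          · intro _; exact hc
          · intro _; rw [this]; exact fun h => ha h.symm
        · rw [if_neg hc]
          simp only [Cyl, Set.mem_setOf_eq]
          exact ⟨fun h => absurd rfl h, fun h => absurd h hc⟩
      have hdelta : deltaMu μ id d = 0 := by
        unfold deltaMu
        have : μ {y : ℤ → A | id y 0 ≠ d y 0} = 0 := by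
          rw [hSeq]
          exact le_antisymm (le_trans (measure_mono hcyl) hU0.le) zero_le
        rw [this]; simp
      have heq := hmetric id d hidCA hdCA hdelta
      have : id x 0 = d x 0 := by rw [heq]
      have h2 : d x 0 = a := by
        rw [hd0 x]
        show (if ∀ j : ℤ, |j| ≤ (r : ℤ) → x j = x j then a else x 0) = a
        rw [if_pos fun j _ => rfl]
      rw [h2] at this
      exact ha this.symm
    · -- full support → metric
      intro hsupp c d hc hd hdelta
      have hS0 : μ {x | c x 0 ≠ d x 0} = 0 := by
        unfold deltaMu at hdelta
        rcases (ENNReal.toReal_eq_zero_iff _).mp hdelta with h | h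
        · exact h
        · exact absurd h (key c d)
      by_contra hne
      obtain ⟨rc, hrc⟩ := hc
      obtain ⟨rd, hrd⟩ := hd
      set r := max rc rd with hr
      obtain ⟨Fc, hFc, hfc⟩ := hasRadius_mono (le_max_left rc rd) hrc
      obtain ⟨Fd, hFd, hfd⟩ := hasRadius_mono (le_max_right rc rd) hrd
      have : ∃ x : ℤ → A, ∃ i : ℤ, c x i ≠ d x i := by
        by_contra h
        push_neg at h
        exact hne (funext fun x => funext fun i => h x i)
      obtain ⟨x, i, hxi⟩ := this
      set z : ℤ → A := fun j => x (i + j) with hz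
      have hcyl : Cyl z r ⊆ {y | c y 0 ≠ d y 0} := by
        intro y hy
        have h1 : c y 0 = Fc z := by
          rw [hfc y 0]
          apply hFc
          intro j hj
          rw [zero_add]
          exact hy j hj
        have h2 : d y 0 = Fd z := by
          rw [hfd y 0]
          apply hFd
          intro j hj
          rw [zero_add]
          exact hy j hj
        have h3 : Fc z = c x i := (hfc x i).symm
        have h4 : Fd z = d x i := (hfd x i).symm
        simp only [Set.mem_setOf_eq, h1, h2, h3, h4]
        exact hxi
      have hpos := hsupp (Cyl z r) (isOpen_Cyl z r) ⟨z, mem_Cyl_self z r⟩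
      have : μ (Cyl z r) = 0 :=
        le_antisymm (le_trans (measure_mono hcyl) hS0.le) zero_le
      rw [this] at hpos
      exact lt_irrefl _ hpos
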